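/- Let X_s, X_t be real random variables with distribution functions F_s, F_t, and suppose P(X_s ≤ x < X_t) ≤ C and P(X_t ≤ x < X_s) ≤ C for all x ∈ ℝ. Define τ²((s,x),(t,y)) = E(1_{X_s ≤ x} − 1_{X_t ≤ y})². Then for all x, y ∈ ℝ: τ²((s,x),(t,y)) ≤ min(|F_s(y) − F_s(x)|, |F_t(y) − F_t(x)|) + 2C. -/

import Mathlib

open MeasureTheory Set

private lemma tr_le {Ω : Type*} [MeasurableSpace Ω] (P : Measure Ω) [IsProbabilityMeasure P]
    {S T U : Set Ω} (h : S ⊆ T ∪ U) :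
    (P S).toReal ≤ (P T).toReal + (P U).toReal := by
  calc (P S).toReal ≤ (P T + P U).toReal :=
        ENNReal.toReal_mono (by finiteness) ((measure_mono h).trans (measure_union_le _ _))
    _ = (P T).toReal + (P U).toReal := ENNReal.toReal_add (measure_ne_top _ _) (measure_ne_top _ _)

private lemma diff_le {Ω : Type*} [MeasurableSpace Ω] (P : Measure Ω) [IsProbabilityMeasure P]
    (X : Ω → ℝ) (hX : Measurable X) (x y : ℝ) :
    (P ({ω | X ω ≤ x} \ {ω | X ω ≤ y})).toReal
      ≤ |(P {ω | X ω ≤ x}).toReal - (P {ω | X ω ≤ y}).toReal| := by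
  rcases le_total x y with hxy | hxy
  · have : {ω | X ω ≤ x} \ {ω | X ω ≤ y} = ∅ := by
      apply Set.diff_eq_empty.mpr
      intro ω hω; exact le_trans hω hxy
    rw [this]; simp [abs_nonneg]
  · have hsub : {ω | X ω ≤ y} ⊆ {ω | X ω ≤ x} := fun ω hω => le_trans hω hxy
    have hmeas : NullMeasurableSet {ω | X ω ≤ y} P :=
      (hX measurableSet_Iic).nullMeasurableSet
    rw [measure_diff hsub hmeas (measure_ne_top _ _),
      ENNReal.toReal_sub_of_le (measure_mono hsub) (measure_ne_top _ _)]
    exact le_abs_self _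


private lemma diff2_le {Ω : Type*} [MeasurableSpace Ω] (P : Measure Ω) [IsProbabilityMeasure P]
    (X : Ω → ℝ) (hX : Measurable X) (x y : ℝ) :
    (P ({ω | X ω ≤ x} \ {ω | X ω ≤ y})).toReal + (P ({ω | X ω ≤ y} \ {ω | X ω ≤ x})).toReal
      ≤ |(P {ω | X ω ≤ x}).toReal - (P {ω | X ω ≤ y}).toReal| := by
  rcases le_total x y with hxy | hxy
  · have he : {ω | X ω ≤ x} \ {ω | X ω ≤ y} = ∅ :=
      Set.diff_eq_empty.mpr (fun ω hω => le_trans hω hxy)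
    rw [he]
    simpa [abs_sub_comm] using diff_le P X hX y x
  · have he : {ω | X ω ≤ y} \ {ω | X ω ≤ x} = ∅ :=
      Set.diff_eq_empty.mpr (fun ω hω => le_trans hω hxy)
    rw [he]
    simpa using diff_le P X hX x y

/-- If `P(X_s ≤ x < X_t) ≤ C` and `P(X_t ≤ x < X_s) ≤ C` for all `x`, then the
squared `L²` distance of indicators satisfies
`τ²((s,x),(t,y)) ≤ min(|F_s(y) − F_s(x)|, |F_t(y) − F_t(x)|) + 2C`. -/
theorem stmt_5 {Ω : Type*} [MeasurableSpace Ω] (P : Measure Ω) [IsProbabilityMeasure P]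
    (Xs Xt : Ω → ℝ) (hXs : Measurable Xs) (hXt : Measurable Xt)
    (C : ℝ) (hC : 0 ≤ C)
    (h1 : ∀ x : ℝ, (P {ω | Xs ω ≤ x ∧ x < Xt ω}).toReal ≤ C)
    (h2 : ∀ x : ℝ, (P {ω | Xt ω ≤ x ∧ x < Xs ω}).toReal ≤ C)
    (Fs Ft : ℝ → ℝ)
    (hFs : ∀ x, Fs x = (P {ω | Xs ω ≤ x}).toReal)
    (hFt : ∀ x, Ft x = (P {ω | Xt ω ≤ x}).toReal) :
    ∀ x y : ℝ,
      (∫ ω, ((if Xs ω ≤ x then (1:ℝ) else 0) - (if Xt ω ≤ y then (1:ℝ) else 0)) ^ 2 ∂P)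
        ≤ min (|Fs y - Fs x|) (|Ft y - Ft x|) + 2 * C := by
  intro x y
  set A : Set Ω := {ω | Xs ω ≤ x} with hA
  set B : Set Ω := {ω | Xt ω ≤ y} with hB
  have hAm : MeasurableSet A := hXs measurableSet_Iic
  have hBm : MeasurableSet B := hXt measurableSet_Iic
  set D : Set Ω := (A \ B) ∪ (B \ A) with hD
  have hDm : MeasurableSet D := (hAm.diff hBm).union (hBm.diff hAm)
  -- integrand equals indicator of D
  have hint : (∫ ω, ((if Xs ω ≤ x then (1:ℝ) else 0) - (if Xt ω ≤ y then (1:ℝ) else 0)) ^ 2 ∂P)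
      = (P D).toReal := by
    rw [← Measure.real_def, ← integral_indicator_one hDm]
    congr 1
    funext ω
    by_cases hs : Xs ω ≤ x <;> by_cases ht : Xt ω ≤ y <;>
      simp [Set.indicator, hD, hA, hB, hs, ht, Set.mem_union, Set.mem_diff, Set.mem_setOf_eq]
  rw [hint]
  -- P D ≤ P(A\B) + P(B\A)
  have hDle : (P D).toReal ≤ (P (A \ B)).toReal + (P (B \ A)).toReal :=
    tr_le P (by rw [hD])
  -- s-side bound
  have hab_s : (P (A \ B)).toReal
      ≤ C + (P ({ω | Xs ω ≤ x} \ {ω | Xs ω ≤ y})).toReal := by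
    have hsub : A \ B ⊆ {ω | Xs ω ≤ y ∧ y < Xt ω} ∪ ({ω | Xs ω ≤ x} \ {ω | Xs ω ≤ y}) := by
      rintro ω ⟨hA', hB'⟩
      have hy : y < Xt ω := lt_of_not_ge hB'
      by_cases h : Xs ω ≤ y
      · exact Or.inl ⟨h, hy⟩
      · exact Or.inr ⟨hA', h⟩
    exact (tr_le P hsub).trans (add_le_add_left (h1 y) _)
  have hba_s : (P (B \ A)).toReal
      ≤ C + (P ({ω | Xs ω ≤ y} \ {ω | Xs ω ≤ x})).toReal := by
    have hsub : B \ A ⊆ {ω | Xt ω ≤ y ∧ y < Xs ω} ∪ ({ω | Xs ω ≤ y} \ {ω | Xs ω ≤ x}) := by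
      rintro ω ⟨hB', hA'⟩
      by_cases h : Xs ω ≤ y
      · exact Or.inr ⟨h, hA'⟩
      · exact Or.inl ⟨hB', lt_of_not_ge h⟩
    exact (tr_le P hsub).trans (add_le_add_left (h2 y) _)
  -- t-side bound
  have hab_t : (P (A \ B)).toReal
      ≤ C + (P ({ω | Xt ω ≤ x} \ {ω | Xt ω ≤ y})).toReal := by
    have hsub : A \ B ⊆ {ω | Xs ω ≤ x ∧ x < Xt ω} ∪ ({ω | Xt ω ≤ x} \ {ω | Xt ω ≤ y}) := by
      rintro ω ⟨hA', hB'⟩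
      by_cases h : Xt ω ≤ x
      · exact Or.inr ⟨h, hB'⟩
      · exact Or.inl ⟨hA', lt_of_not_ge h⟩
    exact (tr_le P hsub).trans (add_le_add_left (h1 x) _)
  have hba_t : (P (B \ A)).toReal
      ≤ C + (P ({ω | Xt ω ≤ y} \ {ω | Xt ω ≤ x})).toReal := by
    have hsub : B \ A ⊆ {ω | Xt ω ≤ x ∧ x < Xs ω} ∪ ({ω | Xt ω ≤ y} \ {ω | Xt ω ≤ x}) := by
      rintro ω ⟨hB', hA'⟩
      have hx : x < Xs ω := lt_of_not_ge hA'
      by_cases h : Xt ω ≤ x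
      · exact Or.inl ⟨h, hx⟩
      · exact Or.inr ⟨hB', h⟩
    exact (tr_le P hsub).trans (add_le_add_left (h2 x) _)
  have hs_bound : (P D).toReal ≤ |Fs y - Fs x| + 2 * C := by
    have h3 := diff2_le P Xs hXs x y
    rw [← hFs x, ← hFs y, abs_sub_comm] at h3
    have := hDle.trans (add_le_add hab_s hba_s)
    linarith
  have ht_bound : (P D).toReal ≤ |Ft y - Ft x| + 2 * C := by
    have h3 := diff2_le P Xt hXt x y
    rw [← hFt x, ← hFt y, abs_sub_comm] at h3
    have := hDle.trans (add_le_add hab_t hba_t)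
    linarith
  rcases min_cases (|Fs y - Fs x|) (|Ft y - Ft x|) with ⟨h, _⟩ | ⟨h, _⟩ <;> rw [h]
  · exact hs_bound
  · exact ht_bound
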